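/- Let c be defined by c(t, t∨) = 3(k+1)t + ℓt∨ − (t∨ − 9m)(t + 3m) − (3k(k+1) + 3ℓ(ℓ+1) + 9m(3m−1))/2 with k = ⌊t⌋, ℓ = ⌊t∨/3⌋, m = ⌊(t∨ − 3t)/9 + 1/3⌋. Then the function (t, t∨) ↦ c(t, t∨) is continuous on ℝ². -/

import Mathlib

noncomputable def costC (t tv : ℝ) : ℝ :=
  let k : ℤ := ⌊t⌋
  let l : ℤ := ⌊tv / 3⌋
  let m : ℤ := ⌊(tv - 3 * t) / 9 + 1 / 3⌋
  3 * ((k : ℝ) + 1) * t + (l : ℝ) * tv - (tv - 9 * m) * (t + 3 * m)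
    - (3 * k * (k + 1) + 3 * l * (l + 1) + 9 * m * (3 * m - 1)) / 2

noncomputable def gAux (x : ℝ) : ℝ := (⌊x⌋ : ℝ) * x - (⌊x⌋ : ℝ) * ((⌊x⌋ : ℝ) + 1) / 2

lemma gAux_eq (x : ℝ) :
    gAux x = (x ^ 2 - x + Int.fract x - (Int.fract x) ^ 2) / 2 := by
  have h : Int.fract x = x - (⌊x⌋ : ℝ) := rfl
  rw [gAux, h]; ring

lemma gAux_continuous : Continuous gAux := by
  have h1 : Continuous fun x : ℝ => Int.fract x - (Int.fract x) ^ 2 := by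
    have := ContinuousOn.comp_fract'' (f := fun y : ℝ => y - y ^ 2)
      (by fun_prop) (by norm_num)
    exact this
  have h2 : Continuous fun x : ℝ => (x ^ 2 - x + (Int.fract x - (Int.fract x) ^ 2)) / 2 := by
    fun_prop
  have : gAux = fun x : ℝ => (x ^ 2 - x + (Int.fract x - (Int.fract x) ^ 2)) / 2 := by
    funext x; rw [gAux_eq]; ring
  rw [this]; exact h2

lemma costC_eq (t tv : ℝ) :
    costC t tv = 3 * gAux t + 3 * gAux (tv / 3) - 27 * gAux ((tv - 3 * t) / 9 + 1 / 3)
      + 3 * t - t * tv := by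
  simp only [costC, gAux]
  ring

theorem costC_continuous : Continuous fun p : ℝ × ℝ => costC p.1 p.2 := by
  have : (fun p : ℝ × ℝ => costC p.1 p.2) = fun p : ℝ × ℝ =>
      3 * gAux p.1 + 3 * gAux (p.2 / 3) - 27 * gAux ((p.2 - 3 * p.1) / 9 + 1 / 3)
        + 3 * p.1 - p.1 * p.2 := by
    funext p; exact costC_eq p.1 p.2
  rw [this]
  have hg := gAux_continuous
  fun_prop
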